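/- Let the node set N = {1,…,2n} be partitioned into three arcs R, G, B, each circularly contiguous in the cyclic order 1, 2, …, 2n (an arc may be empty), with |R| = r, |G| = g, |B| = b. Then there exists a planar pairing of N in which no pair has both endpoints in the same arc if and only if r ≤ g + b, g ≤ r + b, and b ≤ r + g; and when such a planar pairing exists, it is unique. -/

import Mathlib

namespace DD

/-- The node set `{1, …, 2n}`. -/
def nodes (n : ℕ) : Finset ℕ := Finset.Icc 1 (2 * n)

/-- `ρ` is a pairing of `{1,…,2n}`: a fixed-point-free involution of the node set. -/
structure IsPairing (n : ℕ) (ρ : ℕ → ℕ) : Prop where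
  maps : ∀ i ∈ nodes n, ρ i ∈ nodes n
  invol : ∀ i ∈ nodes n, ρ (ρ i) = i
  nofix : ∀ i ∈ nodes n, ρ i ≠ i

/-- Number of crossings of `ρ` among pairs of `ρ` contained in `A`:
a crossing is a pair of pairs `(a,c)`, `(b,d)` of `ρ` with `a < b < c < d`. -/
def numCrossingsOn (A : Finset ℕ) (ρ : ℕ → ℕ) : ℕ :=
  ((A ×ˢ A).filter (fun p => p.1 < p.2 ∧ p.2 < ρ p.1 ∧ ρ p.1 < ρ p.2)).card

/-- Number of crossings of a pairing of `{1,…,2n}`. -/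
def numCrossings (n : ℕ) (ρ : ℕ → ℕ) : ℕ := numCrossingsOn (nodes n) ρ

/-- A pairing is planar if it has no crossings. -/
def IsPlanar (n : ℕ) (ρ : ℕ → ℕ) : Prop := numCrossings n ρ = 0

/-- A coloring `c : ℕ → Bool` of the nodes: `true` = black, `false` = white.
A black-white pairing pairs each black node with a white node. -/
def IsBW (n : ℕ) (c : ℕ → Bool) (ρ : ℕ → ℕ) : Prop :=
  ∀ i ∈ nodes n, c (ρ i) = !(c i)

/-- An odd-even pairing pairs each odd node with an even node. -/
def IsOE (n : ℕ) (ρ : ℕ → ℕ) : Prop :=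
  ∀ i ∈ nodes n, ρ i % 2 ≠ i % 2

/-- The coloring has exactly `n` black (hence exactly `n` white) nodes. -/
def BalancedColoring (n : ℕ) (c : ℕ → Bool) : Prop :=
  ((nodes n).filter (fun i => c i = true)).card = n

/-- The black nodes. -/
def blacks (n : ℕ) (c : ℕ → Bool) : Finset ℕ := (nodes n).filter (fun i => c i = true)

/-- The white nodes. -/
def whites (n : ℕ) (c : ℕ → Bool) : Finset ℕ := (nodes n).filter (fun i => c i = false)

/-- `sign_BW(ρ)`: the sign of the permutation sending `i` to the rank of `w_i = ρ(b_i)`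
among the white nodes, computed as `(-1)` to the number of inversions, i.e. the number of
pairs of black nodes `b < b'` with `ρ b > ρ b'`. -/
def signBW (n : ℕ) (c : ℕ → Bool) (ρ : ℕ → ℕ) : ℤ :=
  (-1 : ℤ) ^ (((nodes n ×ˢ nodes n).filter
    (fun p => c p.1 = true ∧ c p.2 = true ∧ p.1 < p.2 ∧ ρ p.2 < ρ p.1)).card)

/-- `sign_OE(π)`: the sign of the permutation sending `i` to `π(2i−1)/2`, computed as
`(-1)` to the number of pairs of odd nodes `a < b` with `π a > π b`. -/
def signOE (n : ℕ) (π : ℕ → ℕ) : ℤ :=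
  (-1 : ℤ) ^ (((nodes n ×ˢ nodes n).filter
    (fun p => p.1 % 2 = 1 ∧ p.2 % 2 = 1 ∧ p.1 < p.2 ∧ π p.2 < π p.1)).card)

/-- `a_{b,w}`: the number of indices `i` with `min b w ≤ i < max b w` such that nodes `i`
and `i+1` have the same color. -/
def aCount (c : ℕ → Bool) (b w : ℕ) : ℕ :=
  ((Finset.Ico (min b w) (max b w)).filter (fun i => c i = c (i + 1))).card

/-- `sign(b,w) = (−1)^{(|b−w| + a_{b,w} − 1)/2}` for a black node `b` and white node `w`. -/
def pairSign (c : ℕ → Bool) (b w : ℕ) : ℤ :=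
  (-1 : ℤ) ^ ((max b w - min b w + aCount c b w - 1) / 2)

/-- Cyclic successor of node `m` in `{1,…,2n}`. -/
def nextNode (n m : ℕ) : ℕ := if m = 2 * n then 1 else m + 1

/-- Couples of consecutive nodes of the same color, cyclically: indices `m ∈ {1,…,2n}`
with nodes `m` and `m+1` (cyclically) of the same color. -/
def couples (n : ℕ) (c : ℕ → Bool) : Finset ℕ :=
  (nodes n).filter (fun m => c m = c (nextNode n m))

/-- The value `φ(m)` for a couple `m`: writing `r` for the rank of `m` among couples of its
own color, `φ(m) = 2r` if `m` has the same color as node `1`, and `φ(m) = 2r − 1` otherwise. -/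
def phiCouple (n : ℕ) (c : ℕ → Bool) (m : ℕ) : ℕ :=
  if c m = c 1 then 2 * ((couples n c).filter (fun m' => c m' = c m ∧ m' ≤ m)).card
  else 2 * ((couples n c).filter (fun m' => c m' = c m ∧ m' ≤ m)).card - 1

/-- `sign_cons(N)`: the sign of the one-line permutation `(φ(n₁),…,φ(n_{2k}))`, computed
as `(-1)` to its number of inversions. -/
def signCons (n : ℕ) (c : ℕ → Bool) : ℤ :=
  (-1 : ℤ) ^ (((couples n c ×ˢ couples n c).filter
    (fun p => p.1 < p.2 ∧ phiCouple n c p.2 < phiCouple n c p.1)).card)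

/-- The set `T` of nodes that are odd and white, or even and black. -/
def Tset (n : ℕ) (c : ℕ → Bool) : Finset ℕ :=
  (nodes n).filter (fun i => (i % 2 = 1 ∧ c i = false) ∨ (i % 2 = 0 ∧ c i = true))

/-- A subset is balanced if it contains equally many black and white nodes. -/
def BalancedSubset (c : ℕ → Bool) (S : Finset ℕ) : Prop :=
  (S.filter (fun i => c i = true)).card = (S.filter (fun i => c i = false)).card

/-- `ρ` does not connect `S` to its complement: `ρ(S) = S`. -/
def Invariant (S : Finset ℕ) (ρ : ℕ → ℕ) : Prop := ∀ i ∈ S, ρ i ∈ S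

/-- Reachability under the subgroup generated by the involutions `π` and `ρ`. -/
def compRel (n : ℕ) (π ρ : ℕ → ℕ) (a b : ℕ) : Prop :=
  Relation.ReflTransGen (fun u v => u ∈ nodes n ∧ (v = π u ∨ v = ρ u)) a b

open scoped Classical in
/-- The number of components (orbits) of `π ∪ ρ` on the node set. -/
noncomputable def numComponents (n : ℕ) (π ρ : ℕ → ℕ) : ℕ :=
  ((nodes n).image (fun a => (nodes n).filter (fun b => compRel n π ρ a b))).card


/-- The cyclic interval of `{1,…,2n}` of length `len` starting at node `a`. -/
def cycInterval (n a len : ℕ) : Finset ℕ :=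
  (Finset.range len).image (fun t => (a - 1 + t) % (2 * n) + 1)

/-- A subset of `{1,…,2n}` is circularly contiguous if it is an interval in the cyclic
order `1, 2, …, 2n, 1`. -/
def IsCycContiguous (n : ℕ) (S : Finset ℕ) : Prop :=
  ∃ a len, S = cycInterval n a len


section Helpers

variable {n : ℕ}

lemma mem_nodes {i : ℕ} : i ∈ nodes n ↔ 1 ≤ i ∧ i ≤ 2 * n := Finset.mem_Icc

/-- No pair of `ρ` inside `S`. -/
def NoMono (n : ℕ) (S : Finset ℕ) (ρ : ℕ → ℕ) : Prop :=
  ∀ i ∈ nodes n, ¬ (i ∈ S ∧ ρ i ∈ S)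

/-- The full validity predicate. -/
def Valid (n : ℕ) (R G B : Finset ℕ) (ρ : ℕ → ℕ) : Prop :=
  IsPairing n ρ ∧ IsPlanar n ρ ∧ NoMono n R ρ ∧ NoMono n G ρ ∧ NoMono n B ρ

lemma valid_iff (R G B : Finset ℕ) (ρ : ℕ → ℕ) :
    (IsPairing n ρ ∧ IsPlanar n ρ ∧
        ∀ i ∈ nodes n,
          ¬ ((i ∈ R ∧ ρ i ∈ R) ∨ (i ∈ G ∧ ρ i ∈ G) ∨ (i ∈ B ∧ ρ i ∈ B)))
      ↔ Valid n R G B ρ := by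
  unfold Valid NoMono
  constructor
  · rintro ⟨h1, h2, h3⟩
    exact ⟨h1, h2, fun i hi h => h3 i hi (Or.inl h), fun i hi h => h3 i hi (Or.inr (Or.inl h)),
      fun i hi h => h3 i hi (Or.inr (Or.inr h))⟩
  · rintro ⟨h1, h2, h3, h4, h5⟩
    refine ⟨h1, h2, fun i hi h => ?_⟩
    rcases h with h | h | h
    exacts [h3 i hi h, h4 i hi h, h5 i hi h]

lemma isPlanar_iff (ρ : ℕ → ℕ) :
    IsPlanar n ρ ↔ ∀ a ∈ nodes n, ∀ b ∈ nodes n,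
      ¬ (a < b ∧ b < ρ a ∧ ρ a < ρ b) := by
  unfold IsPlanar numCrossings numCrossingsOn
  rw [Finset.card_eq_zero, Finset.filter_eq_empty_iff]
  constructor
  · intro h a ha b hb hab
    have := h (show ((a, b) : ℕ × ℕ) ∈ nodes n ×ˢ nodes n from Finset.mem_product.2 ⟨ha, hb⟩)
    exact this hab
  · intro h p hp hpp
    rcases Finset.mem_product.1 hp with ⟨h1, h2⟩
    exact h _ h1 _ h2 hpp

/-- Key planarity consequence: the open interval under a chord is invariant. -/
lemma chord_inner (ρ : ℕ → ℕ) (hp : IsPairing n ρ) (hpl : IsPlanar n ρ)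
    {i x : ℕ} (hi : i ∈ nodes n) (hx : x ∈ nodes n)
    (h1 : i < x) (h2 : x < ρ i) : i < ρ x ∧ ρ x < ρ i := by
  rw [isPlanar_iff] at hpl
  have hρi : ρ i ∈ nodes n := hp.maps i hi
  have hρx : ρ x ∈ nodes n := hp.maps x hx
  have hii : ρ (ρ i) = i := hp.invol i hi
  have hxx : ρ (ρ x) = x := hp.invol x hx
  constructor
  · by_contra hlt
    push_neg at hlt
    rcases lt_or_eq_of_le hlt with hlt | heq
    · exact hpl (ρ x) hρx i hi ⟨hlt, by omega, by omega⟩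
    · rw [heq] at hxx
      omega
  · by_contra hlt
    push_neg at hlt
    rcases lt_or_eq_of_le hlt with hlt | heq
    · exact hpl i hi x hx ⟨h1, h2, hlt⟩
    · have : ρ (ρ i) = ρ (ρ x) := by rw [heq]
      omega

/-- Counting lemma: if `S` is invariant under a pairing, the number of its elements
in `X` is at most the number outside `X` (within `S`). -/
lemma count_invariant (ρ : ℕ → ℕ) (hp : IsPairing n ρ) (S X : Finset ℕ)
    (hS : S ⊆ nodes n) (hinv : ∀ i ∈ S, ρ i ∈ S)
    (hX : ∀ i ∈ S, i ∈ X → ρ i ∉ X) :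
    (S.filter (· ∈ X)).card ≤ (S.filter (· ∉ X)).card := by
  apply Finset.card_le_card_of_injOn ρ
  · intro a ha
    simp only [Finset.coe_filter, Finset.mem_filter, Set.mem_setOf_eq] at ha ⊢
    exact ⟨hinv a ha.1, hX a ha.1 ha.2⟩
  · intro a ha b hb hab
    simp only [Finset.coe_filter, Set.mem_setOf_eq] at ha hb
    have h1 := hp.invol a (hS ha.1)
    have h2 := hp.invol b (hS hb.1)
    have : ρ (ρ a) = ρ (ρ b) := by rw [hab]
    omega


lemma nomono_card_le (ρ : ℕ → ℕ) (hp : IsPairing n ρ) (X : Finset ℕ)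
    (hX : X ⊆ nodes n) (hnm : NoMono n X ρ) : X.card ≤ ((nodes n) \ X).card := by
  have h := count_invariant ρ hp (nodes n) X (le_refl _) hp.maps
    (fun i hi hiX hρ => hnm i hi ⟨hiX, hρ⟩)
  have e1 : (nodes n).filter (· ∈ X) = X := by
    rw [Finset.filter_mem_eq_inter, Finset.inter_eq_right.2 hX]
  have e2 : (nodes n).filter (· ∉ X) = nodes n \ X := by
    ext x
    simp [Finset.mem_sdiff, Finset.mem_filter]
  rwa [e1, e2] at h

lemma valid_triangle (R G B : Finset ℕ)
    (hRG : Disjoint R G) (hRB : Disjoint R B) (hGB : Disjoint G B)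
    (hunion : R ∪ G ∪ B = nodes n) (ρ : ℕ → ℕ) (hv : Valid n R G B ρ) :
    R.card ≤ G.card + B.card ∧ G.card ≤ R.card + B.card ∧ B.card ≤ R.card + G.card := by
  obtain ⟨hp, _, hR, hG, hB⟩ := hv
  have hRsub : R ⊆ nodes n := hunion ▸ (Finset.subset_union_left.trans Finset.subset_union_left)
  have hGsub : G ⊆ nodes n := hunion ▸ (Finset.subset_union_right.trans Finset.subset_union_left)
  have hBsub : B ⊆ nodes n := hunion ▸ Finset.subset_union_right
  have hcard : R.card + G.card + B.card = (nodes n).card := by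
    rw [← hunion, Finset.card_union_of_disjoint, Finset.card_union_of_disjoint hRG]
    exact Finset.disjoint_union_left.2 ⟨hRB, hGB⟩
  have c1 := nomono_card_le ρ hp R hRsub hR
  have c2 := nomono_card_le ρ hp G hGsub hG
  have c3 := nomono_card_le ρ hp B hBsub hB
  rw [Finset.card_sdiff_of_subset hRsub] at c1
  rw [Finset.card_sdiff_of_subset hGsub] at c2
  rw [Finset.card_sdiff_of_subset hBsub] at c3
  omega


/-- The canonical planar pairing for the normalized configuration. -/
def rho0 (nn r g t1 t2 t3 : ℕ) (i : ℕ) : ℕ :=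
  if i ≤ t3 then nn + 1 - i
  else if i ≤ r + t1 then 2 * r + 1 - i
  else if i ≤ r + g + t2 then 2 * (r + g) + 1 - i
  else nn + 1 - i

lemma core_exists (n r g b : ℕ) (hsum : r + g + b = 2 * n)
    (h1 : r ≤ g + b) (h2 : g ≤ r + b) (h3 : b ≤ r + g) :
    ∃ ρ : ℕ → ℕ, Valid n (Finset.Icc 1 r) (Finset.Icc (r + 1) (r + g))
      (Finset.Icc (r + g + 1) (2 * n)) ρ := by
  obtain ⟨t1, t2, t3, e1, e2, e3⟩ :
      ∃ t1 t2 t3 : ℕ, t1 + t3 = r ∧ t1 + t2 = g ∧ t2 + t3 = b :=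
    ⟨(r + g - b) / 2, (g + b - r) / 2, (r + b - g) / 2, by omega, by omega, by omega⟩
  refine ⟨rho0 (2 * n) r g t1 t2 t3, ⟨?_, ?_, ?_⟩, ?_, ?_, ?_, ?_⟩
  · intro i hi
    rw [mem_nodes] at hi ⊢
    simp only [rho0]
    split_ifs <;> omega
  · intro i hi
    rw [mem_nodes] at hi
    simp only [rho0]
    split_ifs <;> omega
  · intro i hi
    rw [mem_nodes] at hi
    simp only [rho0]
    split_ifs <;> omega
  · rw [isPlanar_iff]
    intro a ha b hb
    rw [mem_nodes] at ha hb
    simp only [rho0]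
    split_ifs <;> omega
  · intro i hi
    rw [mem_nodes] at hi
    simp only [rho0, Finset.mem_Icc]
    split_ifs <;> omega
  · intro i hi
    rw [mem_nodes] at hi
    simp only [rho0, Finset.mem_Icc]
    split_ifs <;> omega
  · intro i hi
    rw [mem_nodes] at hi
    simp only [rho0, Finset.mem_Icc]
    split_ifs <;> omega


lemma chord_outer (ρ : ℕ → ℕ) (hp : IsPairing n ρ) (hpl : IsPlanar n ρ)
    {i x : ℕ} (hi : i ∈ nodes n) (hx : x ∈ nodes n)
    (hlt : i < ρ i) (h : x < i ∨ ρ i < x) :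
    (ρ x < i ∨ ρ i < ρ x) ∧ ρ x ≠ i ∧ ρ x ≠ ρ i := by
  have hρx := hp.maps x hx
  have hxx := hp.invol x hx
  have hii := hp.invol i hi
  have hne1 : ρ x ≠ i := by
    intro he
    rw [he] at hxx
    omega
  have hne2 : ρ x ≠ ρ i := by
    intro he
    rw [he, hii] at hxx
    omega
  refine ⟨?_, hne1, hne2⟩
  by_contra hcon
  push_neg at hcon
  have h1 : i < ρ x := by omega
  have h2 : ρ x < ρ i := by omega
  have h3 := chord_inner ρ hp hpl hi hρx h1 h2
  rw [hxx] at h3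
  omega

lemma forced_RG (n r g b t1 t2 t3 : ℕ) (hsum : r + g + b = 2 * n)
    (e1 : t1 + t3 = r) (e2 : t1 + t2 = g) (e3 : t2 + t3 = b)
    (ρ : ℕ → ℕ)
    (hv : Valid n (Finset.Icc 1 r) (Finset.Icc (r + 1) (r + g))
      (Finset.Icc (r + g + 1) (2 * n)) ρ) :
    ∀ k, 1 ≤ k → k ≤ t1 → ρ (r + 1 - k) = r + k := by
  obtain ⟨hp, hpl, hR, hG, hB⟩ := hv
  intro k
  induction k using Nat.strong_induction_on with
  | _ k IH =>
  intro hk1 hkt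
  have hi : (r + 1 - k) ∈ nodes n := mem_nodes.2 ⟨by omega, by omega⟩
  have hblk : ∀ x, r + 2 - k ≤ x → x ≤ r + k - 1 → ρ x = 2 * r + 1 - x := by
    intro x hx1 hx2
    rcases le_or_gt x r with hxr | hxr
    · have h := IH (r + 1 - x) (by omega) (by omega) (by omega)
      have hx : r + 1 - (r + 1 - x) = x := by omega
      rw [hx] at h
      omega
    · have h := IH (x - r) (by omega) (by omega) (by omega)
      have hinv := hp.invol (r + 1 - (x - r)) (mem_nodes.2 ⟨by omega, by omega⟩)
      rw [h] at hinv
      have hxe : r + (x - r) = x := by omega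
      rw [hxe] at hinv
      omega
  set j := ρ (r + 1 - k) with hjdef
  have hjn := hp.maps _ hi
  rw [mem_nodes] at hjn
  have hji : ρ j = r + 1 - k := by
    have := hp.invol _ hi
    rw [← hjdef] at this
    exact this
  by_contra hne
  have hjR : r + 1 ≤ j := by
    by_contra hcon
    push_neg at hcon
    exact hR (r + 1 - k) hi ⟨Finset.mem_Icc.2 ⟨by omega, by omega⟩,
      Finset.mem_Icc.2 ⟨by omega, by omega⟩⟩
  have hjblk : ¬ (r + 2 - k ≤ j ∧ j ≤ r + k - 1) := by
    rintro ⟨h1, h2⟩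
    have := hblk j h1 h2
    omega
  have hjgt : r + k < j := by omega
  have hinner : ∀ x, r + 1 - k < x → x < j → (r + 1 - k < ρ x ∧ ρ x < j) := by
    intro x h1 h2
    have hx : x ∈ nodes n := mem_nodes.2 ⟨by omega, by omega⟩
    have h3 := chord_inner ρ hp hpl hi hx h1 (by omega)
    omega
  have hS'inv : ∀ x, r + k ≤ x → x ≤ j - 1 → (r + k ≤ ρ x ∧ ρ x ≤ j - 1) := by
    intro x h1 h2
    have h3 := hinner x (by omega) (by omega)
    by_contra hcon
    push_neg at hcon
    have hρlt : ρ x < r + k := by omega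
    have hxb := hblk (ρ x) (by omega) (by omega)
    have hxinv := hp.invol x (mem_nodes.2 ⟨by omega, by omega⟩)
    omega
  rcases le_or_gt j (r + g) with hjG | hjB
  · -- partner in G: monochromatic contradiction at r+k
    have h1 := hS'inv (r + k) (le_refl _) (by omega)
    exact hG (r + k) (mem_nodes.2 ⟨by omega, by omega⟩)
      ⟨Finset.mem_Icc.2 ⟨by omega, by omega⟩, Finset.mem_Icc.2 ⟨by omega, by omega⟩⟩
  · -- partner in B: counting contradiction
    have hS'sub : Finset.Icc (r + k) (j - 1) ⊆ nodes n := by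
      intro x hx
      rw [Finset.mem_Icc] at hx
      exact mem_nodes.2 ⟨by omega, by omega⟩
    have hS'inv' : ∀ x ∈ Finset.Icc (r + k) (j - 1), ρ x ∈ Finset.Icc (r + k) (j - 1) := by
      intro x hx
      rw [Finset.mem_Icc] at hx ⊢
      exact hS'inv x hx.1 hx.2
    have cS1 := count_invariant ρ hp (Finset.Icc (r + k) (j - 1)) (Finset.Icc (r + 1) (r + g))
      hS'sub hS'inv' (fun x hx hx1 hx2 => hG x (hS'sub hx) ⟨hx1, hx2⟩)
    have cS2 := count_invariant ρ hp (Finset.Icc (r + k) (j - 1)) (Finset.Icc (r + g + 1) (2 * n))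
      hS'sub hS'inv' (fun x hx hx1 hx2 => hB x (hS'sub hx) ⟨hx1, hx2⟩)
    have eq1 : (Finset.Icc (r + k) (j - 1)).filter (· ∈ Finset.Icc (r + 1) (r + g))
        = Finset.Icc (r + k) (r + g) := by
      ext x
      simp only [Finset.mem_filter, Finset.mem_Icc]
      omega
    have eq2 : (Finset.Icc (r + k) (j - 1)).filter (· ∉ Finset.Icc (r + 1) (r + g))
        = Finset.Icc (r + g + 1) (j - 1) := by
      ext x
      simp only [Finset.mem_filter, Finset.mem_Icc]
      omega
    have eq3 : (Finset.Icc (r + k) (j - 1)).filter (· ∈ Finset.Icc (r + g + 1) (2 * n))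
        = Finset.Icc (r + g + 1) (j - 1) := by
      ext x
      simp only [Finset.mem_filter, Finset.mem_Icc]
      omega
    have eq4 : (Finset.Icc (r + k) (j - 1)).filter (· ∉ Finset.Icc (r + g + 1) (2 * n))
        = Finset.Icc (r + k) (r + g) := by
      ext x
      simp only [Finset.mem_filter, Finset.mem_Icc]
      omega
    rw [eq1, eq2, Nat.card_Icc, Nat.card_Icc] at cS1
    rw [eq3, eq4, Nat.card_Icc, Nat.card_Icc] at cS2
    -- outer set
    have hOsub : nodes n \ Finset.Icc (r + 1 - k) j ⊆ nodes n := Finset.sdiff_subset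
    have hOinv : ∀ x ∈ nodes n \ Finset.Icc (r + 1 - k) j,
        ρ x ∈ nodes n \ Finset.Icc (r + 1 - k) j := by
      intro x hx
      rw [Finset.mem_sdiff, Finset.mem_Icc] at hx
      obtain ⟨hx1, hx2⟩ := hx
      rw [mem_nodes] at hx1
      have hxn : x ∈ nodes n := mem_nodes.2 ⟨by omega, by omega⟩
      have hout := chord_outer ρ hp hpl hi hxn (by omega) (by omega)
      rw [← hjdef] at hout
      rw [Finset.mem_sdiff, Finset.mem_Icc, mem_nodes]
      have := hp.maps x (mem_nodes.2 ⟨by omega, by omega⟩)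
      rw [mem_nodes] at this
      omega
    have cO1 := count_invariant ρ hp (nodes n \ Finset.Icc (r + 1 - k) j) (Finset.Icc 1 r)
      hOsub hOinv (fun x hx hx1 hx2 => hR x (hOsub hx) ⟨hx1, hx2⟩)
    have cO2 := count_invariant ρ hp (nodes n \ Finset.Icc (r + 1 - k) j)
      (Finset.Icc (r + g + 1) (2 * n))
      hOsub hOinv (fun x hx hx1 hx2 => hB x (hOsub hx) ⟨hx1, hx2⟩)
    have eq5 : (nodes n \ Finset.Icc (r + 1 - k) j).filter (· ∈ Finset.Icc 1 r)
        = Finset.Icc 1 (r - k) := by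
      ext x
      simp only [Finset.mem_filter, Finset.mem_sdiff, Finset.mem_Icc, nodes]
      omega
    have eq6 : (nodes n \ Finset.Icc (r + 1 - k) j).filter (· ∉ Finset.Icc 1 r)
        = Finset.Icc (j + 1) (2 * n) := by
      ext x
      simp only [Finset.mem_filter, Finset.mem_sdiff, Finset.mem_Icc, nodes]
      omega
    have eq7 : (nodes n \ Finset.Icc (r + 1 - k) j).filter (· ∈ Finset.Icc (r + g + 1) (2 * n))
        = Finset.Icc (j + 1) (2 * n) := by
      ext x
      simp only [Finset.mem_filter, Finset.mem_sdiff, Finset.mem_Icc, nodes]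
      omega
    have eq8 : (nodes n \ Finset.Icc (r + 1 - k) j).filter (· ∉ Finset.Icc (r + g + 1) (2 * n))
        = Finset.Icc 1 (r - k) := by
      ext x
      simp only [Finset.mem_filter, Finset.mem_sdiff, Finset.mem_Icc, nodes]
      omega
    rw [eq5, eq6, Nat.card_Icc, Nat.card_Icc] at cO1
    rw [eq7, eq8, Nat.card_Icc, Nat.card_Icc] at cO2
    omega


lemma forced_GB (n r g b t1 t2 t3 : ℕ) (hsum : r + g + b = 2 * n)
    (e1 : t1 + t3 = r) (e2 : t1 + t2 = g) (e3 : t2 + t3 = b)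
    (ρ : ℕ → ℕ)
    (hv : Valid n (Finset.Icc 1 r) (Finset.Icc (r + 1) (r + g))
      (Finset.Icc (r + g + 1) (2 * n)) ρ) :
    ∀ k, 1 ≤ k → k ≤ t2 → ρ (r + g + 1 - k) = r + g + k := by
  obtain ⟨hp, hpl, hR, hG, hB⟩ := hv
  intro k
  induction k using Nat.strong_induction_on with
  | _ k IH =>
  intro hk1 hkt
  have hi : (r + g + 1 - k) ∈ nodes n := mem_nodes.2 ⟨by omega, by omega⟩
  have hblk : ∀ x, r + g + 2 - k ≤ x → x ≤ r + g + k - 1 → ρ x = 2 * (r + g) + 1 - x := by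
    intro x hx1 hx2
    rcases le_or_gt x (r + g) with hxr | hxr
    · have h := IH (r + g + 1 - x) (by omega) (by omega) (by omega)
      have hx : r + g + 1 - (r + g + 1 - x) = x := by omega
      rw [hx] at h
      omega
    · have h := IH (x - (r + g)) (by omega) (by omega) (by omega)
      have hinv := hp.invol (r + g + 1 - (x - (r + g))) (mem_nodes.2 ⟨by omega, by omega⟩)
      rw [h] at hinv
      have hxe : r + g + (x - (r + g)) = x := by omega
      rw [hxe] at hinv
      omega
  set j := ρ (r + g + 1 - k) with hjdef
  have hjn := hp.maps _ hi
  rw [mem_nodes] at hjn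
  have hji : ρ j = r + g + 1 - k := by
    have := hp.invol _ hi
    rw [← hjdef] at this
    exact this
  by_contra hne
  have hjG : ¬ (r + 1 ≤ j ∧ j ≤ r + g) := by
    rintro ⟨h1, h2⟩
    exact hG (r + g + 1 - k) hi ⟨Finset.mem_Icc.2 ⟨by omega, by omega⟩,
      Finset.mem_Icc.2 ⟨by omega, by omega⟩⟩
  have hjblk : ¬ (r + g + 2 - k ≤ j ∧ j ≤ r + g + k - 1) := by
    rintro ⟨h1, h2⟩
    have := hblk j h1 h2
    omega
  rcases le_or_gt j r with hjR | hjB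
  · -- partner in R
    have hIinv : ∀ x, j < x → x < r + g + 1 - k → (j < ρ x ∧ ρ x < r + g + 1 - k) := by
      intro x h1 h2
      have hx : x ∈ nodes n := mem_nodes.2 ⟨by omega, by omega⟩
      have hjn' : j ∈ nodes n := mem_nodes.2 ⟨by omega, by omega⟩
      have h3 := chord_inner ρ hp hpl hjn' hx h1 (by omega)
      rw [hji] at h3
      omega
    have hIsub : Finset.Icc (j + 1) (r + g - k) ⊆ nodes n := by
      intro x hx
      rw [Finset.mem_Icc] at hx
      exact mem_nodes.2 ⟨by omega, by omega⟩
    have hIinv' : ∀ x ∈ Finset.Icc (j + 1) (r + g - k),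
        ρ x ∈ Finset.Icc (j + 1) (r + g - k) := by
      intro x hx
      rw [Finset.mem_Icc] at hx ⊢
      have := hIinv x (by omega) (by omega)
      omega
    have cI1 := count_invariant ρ hp (Finset.Icc (j + 1) (r + g - k)) (Finset.Icc 1 r)
      hIsub hIinv' (fun x hx hx1 hx2 => hR x (hIsub hx) ⟨hx1, hx2⟩)
    have cI2 := count_invariant ρ hp (Finset.Icc (j + 1) (r + g - k))
      (Finset.Icc (r + 1) (r + g))
      hIsub hIinv' (fun x hx hx1 hx2 => hG x (hIsub hx) ⟨hx1, hx2⟩)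
    have eq1 : (Finset.Icc (j + 1) (r + g - k)).filter (· ∈ Finset.Icc 1 r)
        = Finset.Icc (j + 1) r := by
      ext x
      simp only [Finset.mem_filter, Finset.mem_Icc]
      omega
    have eq2 : (Finset.Icc (j + 1) (r + g - k)).filter (· ∉ Finset.Icc 1 r)
        = Finset.Icc (r + 1) (r + g - k) := by
      ext x
      simp only [Finset.mem_filter, Finset.mem_Icc]
      omega
    have eq3 : (Finset.Icc (j + 1) (r + g - k)).filter (· ∈ Finset.Icc (r + 1) (r + g))
        = Finset.Icc (r + 1) (r + g - k) := by
      ext x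
      simp only [Finset.mem_filter, Finset.mem_Icc]
      omega
    have eq4 : (Finset.Icc (j + 1) (r + g - k)).filter (· ∉ Finset.Icc (r + 1) (r + g))
        = Finset.Icc (j + 1) r := by
      ext x
      simp only [Finset.mem_filter, Finset.mem_Icc]
      omega
    rw [eq1, eq2, Nat.card_Icc, Nat.card_Icc] at cI1
    rw [eq3, eq4, Nat.card_Icc, Nat.card_Icc] at cI2
    -- outer set
    have hOsub : nodes n \ Finset.Icc j (r + g + 1 - k) ⊆ nodes n := Finset.sdiff_subset
    have hOinv : ∀ x ∈ nodes n \ Finset.Icc j (r + g + 1 - k),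
        ρ x ∈ nodes n \ Finset.Icc j (r + g + 1 - k) := by
      intro x hx
      rw [Finset.mem_sdiff, Finset.mem_Icc] at hx
      obtain ⟨hx1, hx2⟩ := hx
      rw [mem_nodes] at hx1
      have hxn : x ∈ nodes n := mem_nodes.2 ⟨by omega, by omega⟩
      have hjn' : j ∈ nodes n := mem_nodes.2 ⟨by omega, by omega⟩
      have hout := chord_outer ρ hp hpl hjn' hxn (by omega) (by omega)
      rw [hji] at hout
      rw [Finset.mem_sdiff, Finset.mem_Icc, mem_nodes]
      have := hp.maps x hxn
      rw [mem_nodes] at this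
      omega
    have cO := count_invariant ρ hp (nodes n \ Finset.Icc j (r + g + 1 - k))
      (Finset.Icc (r + g + 1) (2 * n))
      hOsub hOinv (fun x hx hx1 hx2 => hB x (hOsub hx) ⟨hx1, hx2⟩)
    have eq5 : (nodes n \ Finset.Icc j (r + g + 1 - k)).filter
        (· ∈ Finset.Icc (r + g + 1) (2 * n)) = Finset.Icc (r + g + 1) (2 * n) := by
      ext x
      simp only [Finset.mem_filter, Finset.mem_sdiff, Finset.mem_Icc, nodes]
      omega
    have eq6 : (nodes n \ Finset.Icc j (r + g + 1 - k)).filter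
        (· ∉ Finset.Icc (r + g + 1) (2 * n))
        = Finset.Icc 1 (j - 1) ∪ Finset.Icc (r + g + 2 - k) (r + g) := by
      ext x
      simp only [Finset.mem_filter, Finset.mem_sdiff, Finset.mem_Icc, Finset.mem_union, nodes]
      omega
    have hdisj : Disjoint (Finset.Icc 1 (j - 1)) (Finset.Icc (r + g + 2 - k) (r + g)) := by
      rw [Finset.disjoint_left]
      intro x hx1 hx2
      rw [Finset.mem_Icc] at hx1 hx2
      omega
    rw [eq5, eq6, Nat.card_Icc] at cO
    rw [Finset.card_union_of_disjoint hdisj, Nat.card_Icc, Nat.card_Icc] at cO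
    omega
  · -- partner in B
    have hjB' : r + g + k < j := by omega
    have hinner : ∀ x, r + g + 1 - k < x → x < j → (r + g + 1 - k < ρ x ∧ ρ x < j) := by
      intro x h1 h2
      have hx : x ∈ nodes n := mem_nodes.2 ⟨by omega, by omega⟩
      have h3 := chord_inner ρ hp hpl hi hx h1 (by omega)
      omega
    have hS'inv : ∀ x, r + g + k ≤ x → x ≤ j - 1 → (r + g + k ≤ ρ x ∧ ρ x ≤ j - 1) := by
      intro x h1 h2
      have h3 := hinner x (by omega) (by omega)
      by_contra hcon
      push_neg at hcon
      have hρlt : ρ x < r + g + k := by omega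
      have hxb := hblk (ρ x) (by omega) (by omega)
      have hxinv := hp.invol x (mem_nodes.2 ⟨by omega, by omega⟩)
      omega
    have h1 := hS'inv (r + g + k) (le_refl _) (by omega)
    exact hB (r + g + k) (mem_nodes.2 ⟨by omega, by omega⟩)
      ⟨Finset.mem_Icc.2 ⟨by omega, by omega⟩, Finset.mem_Icc.2 ⟨by omega, by omega⟩⟩

lemma forced_BR (n r g b t1 t2 t3 : ℕ) (hsum : r + g + b = 2 * n)
    (e1 : t1 + t3 = r) (e2 : t1 + t2 = g) (e3 : t2 + t3 = b)
    (ρ : ℕ → ℕ)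
    (hv : Valid n (Finset.Icc 1 r) (Finset.Icc (r + 1) (r + g))
      (Finset.Icc (r + g + 1) (2 * n)) ρ) :
    ∀ k, 1 ≤ k → k ≤ t3 → ρ k = 2 * n + 1 - k := by
  obtain ⟨hp, hpl, hR, hG, hB⟩ := hv
  intro k
  induction k using Nat.strong_induction_on with
  | _ k IH =>
  intro hk1 hkt
  have hi : k ∈ nodes n := mem_nodes.2 ⟨by omega, by omega⟩
  have hblkL : ∀ x, 1 ≤ x → x ≤ k - 1 → ρ x = 2 * n + 1 - x := fun x h1 h2 =>
    IH x (by omega) h1 (by omega)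
  have hblkH : ∀ x, 2 * n + 2 - k ≤ x → x ≤ 2 * n → ρ x = 2 * n + 1 - x := by
    intro x hx1 hx2
    have h := IH (2 * n + 1 - x) (by omega) (by omega) (by omega)
    have hinv := hp.invol (2 * n + 1 - x) (mem_nodes.2 ⟨by omega, by omega⟩)
    rw [h] at hinv
    have hxe : 2 * n + 1 - (2 * n + 1 - x) = x := by omega
    rw [hxe] at hinv
    omega
  set j := ρ k with hjdef
  have hjn := hp.maps _ hi
  rw [mem_nodes] at hjn
  have hji : ρ j = k := by
    have := hp.invol _ hi
    rw [← hjdef] at this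
    exact this
  by_contra hne
  have hjR : r + 1 ≤ j := by
    by_contra hcon
    push_neg at hcon
    exact hR k hi ⟨Finset.mem_Icc.2 ⟨by omega, by omega⟩,
      Finset.mem_Icc.2 ⟨by omega, by omega⟩⟩
  have hjblk : ¬ (2 * n + 2 - k ≤ j ∧ j ≤ 2 * n) := by
    rintro ⟨h1, h2⟩
    have := hblkH j h1 h2
    omega
  have hjlt : j < 2 * n + 1 - k := by omega
  -- the truncated outer interval is invariant
  have hO'inv : ∀ x, j + 1 ≤ x → x ≤ 2 * n + 1 - k → (j + 1 ≤ ρ x ∧ ρ x ≤ 2 * n + 1 - k) := by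
    intro x h1 h2
    have hxn : x ∈ nodes n := mem_nodes.2 ⟨by omega, by omega⟩
    have hout := chord_outer ρ hp hpl hi hxn (by omega) (by omega)
    rw [← hjdef] at hout
    have hmaps := hp.maps x hxn
    rw [mem_nodes] at hmaps
    have hxinv := hp.invol x hxn
    constructor
    · by_contra hcon
      push_neg at hcon
      have : ρ x ≤ k - 1 := by omega
      have := hblkL (ρ x) (by omega) this
      omega
    · by_contra hcon
      push_neg at hcon
      have := hblkH (ρ x) (by omega) (by omega)
      omega
  rcases le_or_gt j (r + g) with hjG | hjB
  · -- partner in G: two counting arguments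
    have hIinv : ∀ x, k < x → x < j → (k < ρ x ∧ ρ x < j) := by
      intro x h1 h2
      have hx : x ∈ nodes n := mem_nodes.2 ⟨by omega, by omega⟩
      have h3 := chord_inner ρ hp hpl hi hx h1 (by omega)
      omega
    have hIsub : Finset.Icc (k + 1) (j - 1) ⊆ nodes n := by
      intro x hx
      rw [Finset.mem_Icc] at hx
      exact mem_nodes.2 ⟨by omega, by omega⟩
    have hIinv' : ∀ x ∈ Finset.Icc (k + 1) (j - 1),
        ρ x ∈ Finset.Icc (k + 1) (j - 1) := by
      intro x hx
      rw [Finset.mem_Icc] at hx ⊢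
      have := hIinv x (by omega) (by omega)
      omega
    have cI1 := count_invariant ρ hp (Finset.Icc (k + 1) (j - 1)) (Finset.Icc 1 r)
      hIsub hIinv' (fun x hx hx1 hx2 => hR x (hIsub hx) ⟨hx1, hx2⟩)
    have cI2 := count_invariant ρ hp (Finset.Icc (k + 1) (j - 1))
      (Finset.Icc (r + 1) (r + g))
      hIsub hIinv' (fun x hx hx1 hx2 => hG x (hIsub hx) ⟨hx1, hx2⟩)
    have eq1 : (Finset.Icc (k + 1) (j - 1)).filter (· ∈ Finset.Icc 1 r)
        = Finset.Icc (k + 1) r := by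
      ext x
      simp only [Finset.mem_filter, Finset.mem_Icc]
      omega
    have eq2 : (Finset.Icc (k + 1) (j - 1)).filter (· ∉ Finset.Icc 1 r)
        = Finset.Icc (r + 1) (j - 1) := by
      ext x
      simp only [Finset.mem_filter, Finset.mem_Icc]
      omega
    have eq3 : (Finset.Icc (k + 1) (j - 1)).filter (· ∈ Finset.Icc (r + 1) (r + g))
        = Finset.Icc (r + 1) (j - 1) := by
      ext x
      simp only [Finset.mem_filter, Finset.mem_Icc]
      omega
    have eq4 : (Finset.Icc (k + 1) (j - 1)).filter (· ∉ Finset.Icc (r + 1) (r + g))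
        = Finset.Icc (k + 1) r := by
      ext x
      simp only [Finset.mem_filter, Finset.mem_Icc]
      omega
    rw [eq1, eq2, Nat.card_Icc, Nat.card_Icc] at cI1
    rw [eq3, eq4, Nat.card_Icc, Nat.card_Icc] at cI2
    have hO'sub : Finset.Icc (j + 1) (2 * n + 1 - k) ⊆ nodes n := by
      intro x hx
      rw [Finset.mem_Icc] at hx
      exact mem_nodes.2 ⟨by omega, by omega⟩
    have hO'inv' : ∀ x ∈ Finset.Icc (j + 1) (2 * n + 1 - k),
        ρ x ∈ Finset.Icc (j + 1) (2 * n + 1 - k) := by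
      intro x hx
      rw [Finset.mem_Icc] at hx ⊢
      exact hO'inv x hx.1 hx.2
    have cO := count_invariant ρ hp (Finset.Icc (j + 1) (2 * n + 1 - k))
      (Finset.Icc (r + g + 1) (2 * n))
      hO'sub hO'inv' (fun x hx hx1 hx2 => hB x (hO'sub hx) ⟨hx1, hx2⟩)
    have eq5 : (Finset.Icc (j + 1) (2 * n + 1 - k)).filter
        (· ∈ Finset.Icc (r + g + 1) (2 * n)) = Finset.Icc (r + g + 1) (2 * n + 1 - k) := by
      ext x
      simp only [Finset.mem_filter, Finset.mem_Icc]
      omega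
    have eq6 : (Finset.Icc (j + 1) (2 * n + 1 - k)).filter
        (· ∉ Finset.Icc (r + g + 1) (2 * n)) = Finset.Icc (j + 1) (r + g) := by
      ext x
      simp only [Finset.mem_filter, Finset.mem_Icc]
      omega
    rw [eq5, eq6, Nat.card_Icc, Nat.card_Icc] at cO
    omega
  · -- partner in B: monochromatic contradiction at j+1
    have h1 := hO'inv (j + 1) (le_refl _) (by omega)
    exact hB (j + 1) (mem_nodes.2 ⟨by omega, by omega⟩)
      ⟨Finset.mem_Icc.2 ⟨by omega, by omega⟩, Finset.mem_Icc.2 ⟨by omega, by omega⟩⟩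


lemma valid_eq_rho0 (n r g b t1 t2 t3 : ℕ) (hsum : r + g + b = 2 * n)
    (e1 : t1 + t3 = r) (e2 : t1 + t2 = g) (e3 : t2 + t3 = b)
    (ρ : ℕ → ℕ)
    (hv : Valid n (Finset.Icc 1 r) (Finset.Icc (r + 1) (r + g))
      (Finset.Icc (r + g + 1) (2 * n)) ρ) :
    ∀ i ∈ nodes n, ρ i = rho0 (2 * n) r g t1 t2 t3 i := by
  have hRG := forced_RG n r g b t1 t2 t3 hsum e1 e2 e3 ρ hv
  have hGB := forced_GB n r g b t1 t2 t3 hsum e1 e2 e3 ρ hv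
  have hBR := forced_BR n r g b t1 t2 t3 hsum e1 e2 e3 ρ hv
  obtain ⟨hp, -, -, -, -⟩ := hv
  intro i hi
  rw [mem_nodes] at hi
  rcases (show i ≤ t3 ∨ (t3 < i ∧ i ≤ r) ∨ (r < i ∧ i ≤ r + t1) ∨
      (r + t1 < i ∧ i ≤ r + g) ∨ (r + g < i ∧ i ≤ r + g + t2) ∨
      (r + g + t2 < i) from by omega) with hc | hc | hc | hc | hc | hc
  · have h := hBR i (by omega) (by omega)
    simp only [rho0]
    split_ifs <;> omega
  · have h := hRG (r + 1 - i) (by omega) (by omega)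
    have e : r + 1 - (r + 1 - i) = i := by omega
    rw [e] at h
    simp only [rho0]
    split_ifs <;> omega
  · have h := hRG (i - r) (by omega) (by omega)
    have hinv := hp.invol (r + 1 - (i - r)) (mem_nodes.2 ⟨by omega, by omega⟩)
    rw [h] at hinv
    have e : r + (i - r) = i := by omega
    rw [e] at hinv
    simp only [rho0]
    split_ifs <;> omega
  · have h := hGB (r + g + 1 - i) (by omega) (by omega)
    have e : r + g + 1 - (r + g + 1 - i) = i := by omega
    rw [e] at h
    simp only [rho0]
    split_ifs <;> omega
  · have h := hGB (i - (r + g)) (by omega) (by omega)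
    have hinv := hp.invol (r + g + 1 - (i - (r + g))) (mem_nodes.2 ⟨by omega, by omega⟩)
    rw [h] at hinv
    have e : r + g + (i - (r + g)) = i := by omega
    rw [e] at hinv
    simp only [rho0]
    split_ifs <;> omega
  · have h := hBR (2 * n + 1 - i) (by omega) (by omega)
    have hinv := hp.invol (2 * n + 1 - i) (mem_nodes.2 ⟨by omega, by omega⟩)
    rw [h] at hinv
    have e : 2 * n + 1 - (2 * n + 1 - i) = i := by omega
    rw [e] at hinv
    simp only [rho0]
    split_ifs <;> omega

lemma core_unique (n r g b : ℕ) (hsum : r + g + b = 2 * n)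
    (ρ₁ ρ₂ : ℕ → ℕ)
    (hv1 : Valid n (Finset.Icc 1 r) (Finset.Icc (r + 1) (r + g))
      (Finset.Icc (r + g + 1) (2 * n)) ρ₁)
    (hv2 : Valid n (Finset.Icc 1 r) (Finset.Icc (r + 1) (r + g))
      (Finset.Icc (r + g + 1) (2 * n)) ρ₂) :
    ∀ i ∈ nodes n, ρ₁ i = ρ₂ i := by
  have hdisjRG : Disjoint (Finset.Icc 1 r) (Finset.Icc (r + 1) (r + g)) := by
    rw [Finset.disjoint_left]
    intro x h1 h2
    rw [Finset.mem_Icc] at h1 h2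
    omega
  have hdisjRB : Disjoint (Finset.Icc 1 r) (Finset.Icc (r + g + 1) (2 * n)) := by
    rw [Finset.disjoint_left]
    intro x h1 h2
    rw [Finset.mem_Icc] at h1 h2
    omega
  have hdisjGB : Disjoint (Finset.Icc (r + 1) (r + g)) (Finset.Icc (r + g + 1) (2 * n)) := by
    rw [Finset.disjoint_left]
    intro x h1 h2
    rw [Finset.mem_Icc] at h1 h2
    omega
  have hun : Finset.Icc 1 r ∪ Finset.Icc (r + 1) (r + g) ∪ Finset.Icc (r + g + 1) (2 * n)
      = nodes n := by
    ext x
    simp only [Finset.mem_union, Finset.mem_Icc, nodes]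
    omega
  have htri := valid_triangle _ _ _ hdisjRG hdisjRB hdisjGB hun ρ₁ hv1
  rw [Nat.card_Icc, Nat.card_Icc, Nat.card_Icc] at htri
  obtain ⟨t1, t2, t3, e1, e2, e3⟩ :
      ∃ t1 t2 t3 : ℕ, t1 + t3 = r ∧ t1 + t2 = g ∧ t2 + t3 = b := by
    refine ⟨(r + g - b) / 2, (g + b - r) / 2, (r + b - g) / 2, by omega, by omega, by omega⟩
  intro i hi
  rw [valid_eq_rho0 n r g b t1 t2 t3 hsum e1 e2 e3 ρ₁ hv1 i hi,
    valid_eq_rho0 n r g b t1 t2 t3 hsum e1 e2 e3 ρ₂ hv2 i hi]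


/-- Rotation of the circle by `k`. -/
def rot (n k i : ℕ) : ℕ := (i - 1 + k) % (2 * n) + 1

lemma rot_mem (hn : 0 < n) {i : ℕ} (k : ℕ) (hi : i ∈ nodes n) : rot n k i ∈ nodes n := by
  rw [mem_nodes]
  unfold rot
  have := Nat.mod_lt (i - 1 + k) (show 0 < 2 * n by omega)
  omega

lemma rot_rot (k k' i : ℕ) : rot n k' (rot n k i) = rot n (k + k') i := by
  unfold rot
  rw [Nat.add_sub_cancel, Nat.mod_add_mod, Nat.add_assoc]

lemma rot_2n (hn : 0 < n) {i : ℕ} (hi : i ∈ nodes n) : rot n (2 * n) i = i := by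
  rw [mem_nodes] at hi
  unfold rot
  rw [Nat.add_mod_right, Nat.mod_eq_of_lt (by omega)]
  omega

lemma rot_zero (hn : 0 < n) {i : ℕ} (hi : i ∈ nodes n) : rot n 0 i = i := by
  rw [mem_nodes] at hi
  unfold rot
  rw [Nat.add_zero, Nat.mod_eq_of_lt (by omega)]
  omega

lemma rot_mod (k i : ℕ) : rot n k i = rot n (k % (2 * n)) i := by
  unfold rot
  rw [Nat.add_mod_mod]

lemma rot_cancel (hn : 0 < n) {k : ℕ} (hk : k ≤ 2 * n) {i : ℕ} (hi : i ∈ nodes n) :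
    rot n (2 * n - k) (rot n k i) = i := by
  rw [rot_rot]
  have : k + (2 * n - k) = 2 * n := by omega
  rw [this]
  exact rot_2n hn hi

lemma rot_cancel' (hn : 0 < n) {k : ℕ} (hk : k ≤ 2 * n) {i : ℕ} (hi : i ∈ nodes n) :
    rot n k (rot n (2 * n - k) i) = i := by
  rw [rot_rot]
  have : 2 * n - k + k = 2 * n := by omega
  rw [this]
  exact rot_2n hn hi

lemma rot_spec (hn : 0 < n) {k i : ℕ} (hk : k ≤ 2 * n) (hi1 : 1 ≤ i) (hi2 : i ≤ 2 * n) :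
    (i + k ≤ 2 * n ∧ rot n k i = i + k) ∨ (2 * n < i + k ∧ rot n k i + 2 * n = i + k) := by
  unfold rot
  rcases le_or_gt (i + k) (2 * n) with h | h
  · left
    rw [Nat.mod_eq_of_lt (by omega)]
    omega
  · right
    rw [Nat.mod_eq_sub_mod (by omega), Nat.mod_eq_of_lt (by omega)]
    omega

lemma image_rot_cancel (hn : 0 < n) {k : ℕ} (hk : k ≤ 2 * n) {S : Finset ℕ}
    (hS : S ⊆ nodes n) : (S.image (rot n k)).image (rot n (2 * n - k)) = S := by
  rw [Finset.image_image]
  have : S.image (rot n (2 * n - k) ∘ rot n k) = S.image id := by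
    apply Finset.image_congr
    intro x hx
    exact rot_cancel hn hk (hS hx)
  rw [this, Finset.image_id]

lemma image_rot_cancel' (hn : 0 < n) {k : ℕ} (hk : k ≤ 2 * n) {S : Finset ℕ}
    (hS : S ⊆ nodes n) : (S.image (rot n (2 * n - k))).image (rot n k) = S := by
  rw [Finset.image_image]
  have : S.image (rot n k ∘ rot n (2 * n - k)) = S.image id := by
    apply Finset.image_congr
    intro x hx
    exact rot_cancel' hn hk (hS hx)
  rw [this, Finset.image_id]

lemma image_rot_nodes (hn : 0 < n) {k : ℕ} (hk : k ≤ 2 * n) :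
    (nodes n).image (rot n k) = nodes n := by
  apply Finset.Subset.antisymm
  · intro x hx
    rw [Finset.mem_image] at hx
    obtain ⟨y, hy, rfl⟩ := hx
    exact rot_mem hn k hy
  · intro x hx
    rw [Finset.mem_image]
    exact ⟨rot n (2 * n - k) x, rot_mem hn _ hx, rot_cancel' hn hk hx⟩

lemma image_rot_Icc (hn : 0 < n) {m l : ℕ} (hm : m < 2 * n) (hl : l ≤ 2 * n) :
    (Finset.Icc 1 l).image (rot n m) =
      if m + l ≤ 2 * n then Finset.Icc (m + 1) (m + l)
      else Finset.Icc (m + 1) (2 * n) ∪ Finset.Icc 1 (m + l - 2 * n) := by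
  split_ifs with hcase
  · ext x
    simp only [Finset.mem_image, Finset.mem_Icc]
    constructor
    · rintro ⟨u, hu, rfl⟩
      have := rot_spec hn (show m ≤ 2 * n by omega) hu.1 (by omega)
      omega
    · intro hx
      refine ⟨x - m, by omega, ?_⟩
      have := rot_spec hn (show m ≤ 2 * n by omega) (show 1 ≤ x - m by omega)
        (show x - m ≤ 2 * n by omega)
      omega
  · ext x
    simp only [Finset.mem_image, Finset.mem_Icc, Finset.mem_union]
    constructor
    · rintro ⟨u, hu, rfl⟩
      have := rot_spec hn (show m ≤ 2 * n by omega) hu.1 (by omega)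
      omega
    · intro hx
      rcases le_or_gt (m + 1) x with h | h
      · refine ⟨x - m, by omega, ?_⟩
        have := rot_spec hn (show m ≤ 2 * n by omega) (show 1 ≤ x - m by omega)
          (show x - m ≤ 2 * n by omega)
        omega
      · refine ⟨x + 2 * n - m, by omega, ?_⟩
        have := rot_spec hn (show m ≤ 2 * n by omega) (show 1 ≤ x + 2 * n - m by omega)
          (show x + 2 * n - m ≤ 2 * n by omega)
        omega

lemma cyc_image (a len : ℕ) :
    cycInterval n a len = (cycInterval n 1 len).image (rot n (a - 1)) := by
  unfold cycInterval
  rw [Finset.image_image]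
  apply Finset.image_congr
  intro t _
  simp only [Function.comp_apply, rot]
  rw [Nat.add_sub_cancel, Nat.mod_add_mod]
  ring_nf

lemma cyc_one (hn : 0 < n) {len : ℕ} (hl : len ≤ 2 * n) :
    cycInterval n 1 len = Finset.Icc 1 len := by
  ext x
  unfold cycInterval
  simp only [Finset.mem_image, Finset.mem_range, Finset.mem_Icc]
  constructor
  · rintro ⟨t, ht, rfl⟩
    rw [show 1 - 1 + t = t by omega, Nat.mod_eq_of_lt (by omega)]
    omega
  · intro hx
    refine ⟨x - 1, by omega, ?_⟩
    rw [show 1 - 1 + (x - 1) = x - 1 by omega, Nat.mod_eq_of_lt (by omega)]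
    omega

lemma cyc_trunc (hn : 0 < n) {a len : ℕ} (hl : 2 * n ≤ len) :
    cycInterval n a len = cycInterval n a (2 * n) := by
  ext x
  unfold cycInterval
  simp only [Finset.mem_image, Finset.mem_range]
  constructor
  · rintro ⟨t, ht, rfl⟩
    refine ⟨t % (2 * n), Nat.mod_lt _ (by omega), ?_⟩
    rw [Nat.add_mod_mod]
  · rintro ⟨t, ht, rfl⟩
    exact ⟨t, by omega, rfl⟩

lemma cyc_normal (hn : 0 < n) {S : Finset ℕ} (h : IsCycContiguous n S) :
    ∃ m l, m < 2 * n ∧ l ≤ 2 * n ∧ S = (Finset.Icc 1 l).image (rot n m) := by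
  obtain ⟨a, len, rfl⟩ := h
  refine ⟨(a - 1) % (2 * n), min len (2 * n), Nat.mod_lt _ (by omega), by omega, ?_⟩
  have h1 : cycInterval n a len = cycInterval n a (min len (2 * n)) := by
    rcases le_or_gt (2 * n) len with h | h
    · rw [cyc_trunc hn h]
      congr 1
      omega
    · congr 1
      omega
  rw [h1, cyc_image, cyc_one hn (by omega)]
  apply Finset.image_congr
  intro x _
  exact rot_mod _ _


lemma nomono_conj (hn : 0 < n) {k : ℕ} (hk : k ≤ 2 * n) {A : Finset ℕ}
    (hA : A ⊆ nodes n) {ρ ρ' : ℕ → ℕ} (hp : IsPairing n ρ)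
    (hρ' : ∀ i, ρ' i = rot n k (ρ (rot n (2 * n - k) i)))
    (hm : NoMono n A ρ) : NoMono n (A.image (rot n k)) ρ' := by
  intro i hi hcon
  obtain ⟨hiA, hρA⟩ := hcon
  obtain ⟨x, hx, rfl⟩ := Finset.mem_image.1 hiA
  have hxm : x ∈ nodes n := hA hx
  have hback : rot n (2 * n - k) (rot n k x) = x := rot_cancel hn hk hxm
  obtain ⟨y, hy, hyx⟩ := Finset.mem_image.1 hρA
  have hyeq : y = ρ x := by
    have h1 : rot n (2 * n - k) (rot n k y) = y := rot_cancel hn hk (hA hy)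
    rw [hyx, hρ', hback] at h1
    rw [← h1, rot_cancel hn hk (hp.maps x hxm)]
  exact hm x hxm ⟨hx, hyeq ▸ hy⟩

lemma valid_conj (hn : 0 < n) {k : ℕ} (hk : k ≤ 2 * n) {A B C : Finset ℕ}
    (hA : A ⊆ nodes n) (hB : B ⊆ nodes n) (hC : C ⊆ nodes n) {ρ ρ' : ℕ → ℕ}
    (hρ' : ∀ i, ρ' i = rot n k (ρ (rot n (2 * n - k) i)))
    (hv : Valid n A B C ρ) :
    Valid n (A.image (rot n k)) (B.image (rot n k)) (C.image (rot n k)) ρ' := by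
  obtain ⟨hp, hpl, hmA, hmB, hmC⟩ := hv
  have hm2 : 2 * n - k ≤ 2 * n := by omega
  have hpair : IsPairing n ρ' := by
    constructor
    · intro i hi
      rw [hρ']
      exact rot_mem hn k (hp.maps _ (rot_mem hn _ hi))
    · intro i hi
      have him : rot n (2 * n - k) i ∈ nodes n := rot_mem hn _ hi
      rw [hρ', hρ', rot_cancel hn hk (hp.maps _ him), hp.invol _ him]
      exact rot_cancel' hn hk hi
    · intro i hi heq
      rw [hρ'] at heq
      have him : rot n (2 * n - k) i ∈ nodes n := rot_mem hn _ hi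
      have := congrArg (rot n (2 * n - k)) heq
      rw [rot_cancel hn hk (hp.maps _ him)] at this
      exact hp.nofix _ him this
  refine ⟨hpair, ?_, nomono_conj hn hk hA hp hρ' hmA, nomono_conj hn hk hB hp hρ' hmB,
    nomono_conj hn hk hC hp hρ' hmC⟩
  rw [isPlanar_iff]
  rw [isPlanar_iff] at hpl
  have no4 : ∀ p u, p ∈ nodes n → u ∈ nodes n → p < u → u < ρ p → ρ p < ρ u → False :=
    fun p u hpm hum i1 i2 i3 => hpl p hpm u hum ⟨i1, i2, i3⟩
  intro a ha b hb hcross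
  obtain ⟨h1, h2, h3⟩ := hcross
  have hca : ρ' a ∈ nodes n := hpair.maps a ha
  have hdb : ρ' b ∈ nodes n := hpair.maps b hb
  have hma : rot n (2 * n - k) a ∈ nodes n := rot_mem hn _ ha
  have hmb : rot n (2 * n - k) b ∈ nodes n := rot_mem hn _ hb
  have hmc : rot n (2 * n - k) (ρ' a) ∈ nodes n := rot_mem hn _ hca
  have hmd : rot n (2 * n - k) (ρ' b) ∈ nodes n := rot_mem hn _ hdb
  have eac : ρ (rot n (2 * n - k) a) = rot n (2 * n - k) (ρ' a) := by
    rw [hρ' a]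
    exact (rot_cancel hn hk (hp.maps _ hma)).symm
  have ebd : ρ (rot n (2 * n - k) b) = rot n (2 * n - k) (ρ' b) := by
    rw [hρ' b]
    exact (rot_cancel hn hk (hp.maps _ hmb)).symm
  have eca : ρ (rot n (2 * n - k) (ρ' a)) = rot n (2 * n - k) a := by
    rw [← eac, hp.invol _ hma]
  have edb : ρ (rot n (2 * n - k) (ρ' b)) = rot n (2 * n - k) b := by
    rw [← ebd, hp.invol _ hmb]
  rw [mem_nodes] at ha hb hca hdb
  have sa := rot_spec hn (k := 2 * n - k) hm2 ha.1 ha.2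
  have sb := rot_spec hn (k := 2 * n - k) hm2 hb.1 hb.2
  have sc := rot_spec hn (k := 2 * n - k) hm2 hca.1 hca.2
  have sd := rot_spec hn (k := 2 * n - k) hm2 hdb.1 hdb.2
  rcases sa with sa | sa <;> rcases sb with sb | sb <;> rcases sc with sc | sc <;>
    rcases sd with sd | sd <;>
    first
      | exact no4 (rot n (2 * n - k) a) (rot n (2 * n - k) b) hma hmb
          (by omega) (by omega) (by omega)
      | exact no4 (rot n (2 * n - k) (ρ' b)) (rot n (2 * n - k) a) hmd hma
          (by omega) (by omega) (by omega)
      | exact no4 (rot n (2 * n - k) (ρ' a)) (rot n (2 * n - k) (ρ' b)) hmc hmd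
          (by omega) (by omega) (by omega)
      | exact no4 (rot n (2 * n - k) b) (rot n (2 * n - k) (ρ' a)) hmb hmc
          (by omega) (by omega) (by omega)
      | omega


/-- The full content of statement 18 for a given triple of arcs. -/
def Stmt (n : ℕ) (R G B : Finset ℕ) : Prop :=
  ((∃ ρ : ℕ → ℕ, Valid n R G B ρ) ↔
    (R.card ≤ G.card + B.card ∧ G.card ≤ R.card + B.card ∧ B.card ≤ R.card + G.card)) ∧
  (∀ ρ₁ ρ₂ : ℕ → ℕ, Valid n R G B ρ₁ → Valid n R G B ρ₂ → ∀ i ∈ nodes n, ρ₁ i = ρ₂ i)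

lemma valid_swap12 {A B C : Finset ℕ} {ρ : ℕ → ℕ} :
    Valid n A B C ρ ↔ Valid n B A C ρ := by unfold Valid; tauto

lemma valid_swap23 {A B C : Finset ℕ} {ρ : ℕ → ℕ} :
    Valid n A B C ρ ↔ Valid n A C B ρ := by unfold Valid; tauto

lemma stmt_swap12 {A B C : Finset ℕ} (h : Stmt n A B C) : Stmt n B A C := by
  obtain ⟨h1, h2⟩ := h
  constructor
  · constructor
    · rintro ⟨ρ, hv⟩
      have := h1.1 ⟨ρ, valid_swap12.2 hv⟩
      omega
    · intro htri
      obtain ⟨ρ, hv⟩ := h1.2 (by omega)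
      exact ⟨ρ, valid_swap12.1 hv⟩
  · intro ρ₁ ρ₂ hv1 hv2
    exact h2 ρ₁ ρ₂ (valid_swap12.2 hv1) (valid_swap12.2 hv2)

lemma stmt_swap23 {A B C : Finset ℕ} (h : Stmt n A B C) : Stmt n A C B := by
  obtain ⟨h1, h2⟩ := h
  constructor
  · constructor
    · rintro ⟨ρ, hv⟩
      have := h1.1 ⟨ρ, valid_swap23.2 hv⟩
      omega
    · intro htri
      obtain ⟨ρ, hv⟩ := h1.2 (by omega)
      exact ⟨ρ, valid_swap23.1 hv⟩
  · intro ρ₁ ρ₂ hv1 hv2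
    exact h2 ρ₁ ρ₂ (valid_swap23.2 hv1) (valid_swap23.2 hv2)

lemma stmt_norm (n r g b : ℕ) (hsum : r + g + b = 2 * n) :
    Stmt n (Finset.Icc 1 r) (Finset.Icc (r + 1) (r + g)) (Finset.Icc (r + g + 1) (2 * n)) := by
  have hdisjRG : Disjoint (Finset.Icc 1 r) (Finset.Icc (r + 1) (r + g)) := by
    rw [Finset.disjoint_left]
    intro x h1 h2
    rw [Finset.mem_Icc] at h1 h2
    omega
  have hdisjRB : Disjoint (Finset.Icc 1 r) (Finset.Icc (r + g + 1) (2 * n)) := by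
    rw [Finset.disjoint_left]
    intro x h1 h2
    rw [Finset.mem_Icc] at h1 h2
    omega
  have hdisjGB : Disjoint (Finset.Icc (r + 1) (r + g)) (Finset.Icc (r + g + 1) (2 * n)) := by
    rw [Finset.disjoint_left]
    intro x h1 h2
    rw [Finset.mem_Icc] at h1 h2
    omega
  have hun : Finset.Icc 1 r ∪ Finset.Icc (r + 1) (r + g) ∪ Finset.Icc (r + g + 1) (2 * n)
      = nodes n := by
    ext x
    simp only [Finset.mem_union, Finset.mem_Icc, nodes]
    omega
  constructor
  · constructor
    · rintro ⟨ρ, hv⟩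
      have := valid_triangle _ _ _ hdisjRG hdisjRB hdisjGB hun ρ hv
      exact this
    · intro htri
      rw [Nat.card_Icc, Nat.card_Icc, Nat.card_Icc] at htri
      exact core_exists n r g b hsum (by omega) (by omega) (by omega)
  · exact core_unique n r g b hsum

lemma card_image_rot (hn : 0 < n) {k : ℕ} (hk : k ≤ 2 * n) {S : Finset ℕ}
    (hS : S ⊆ nodes n) : (S.image (rot n k)).card = S.card := by
  apply Finset.card_image_of_injOn
  intro a ha b hb hab
  have := congrArg (rot n (2 * n - k)) hab
  rwa [rot_cancel hn hk (hS ha), rot_cancel hn hk (hS hb)] at this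

lemma image_rot_subset_nodes (hn : 0 < n) {k : ℕ} {S : Finset ℕ} (hS : S ⊆ nodes n) :
    S.image (rot n k) ⊆ nodes n := by
  intro x hx
  obtain ⟨y, hy, rfl⟩ := Finset.mem_image.1 hx
  exact rot_mem hn k (hS hy)

lemma stmt_rot (hn : 0 < n) {k : ℕ} (hk : k ≤ 2 * n) {A B C : Finset ℕ}
    (hA : A ⊆ nodes n) (hB : B ⊆ nodes n) (hC : C ⊆ nodes n)
    (h : Stmt n A B C) :
    Stmt n (A.image (rot n k)) (B.image (rot n k)) (C.image (rot n k)) := by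
  obtain ⟨h1, h2⟩ := h
  have hk' : 2 * n - k ≤ 2 * n := by omega
  have hk'' : 2 * n - (2 * n - k) = k := by omega
  have hA' := image_rot_subset_nodes hn (k := k) hA
  have hB' := image_rot_subset_nodes hn (k := k) hB
  have hC' := image_rot_subset_nodes hn (k := k) hC
  -- pull a valid pairing on the images back to one on A, B, C
  have pull : ∀ ρ' : ℕ → ℕ, Valid n (A.image (rot n k)) (B.image (rot n k))
      (C.image (rot n k)) ρ' →
      Valid n A B C (fun i => rot n (2 * n - k) (ρ' (rot n k i))) := by
    intro ρ' hv'
    have hconj := valid_conj hn hk' hA' hB' hC'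
      (ρ := ρ') (ρ' := fun i => rot n (2 * n - k) (ρ' (rot n k i)))
      (fun i => by rw [hk'']) hv'
    rwa [image_rot_cancel hn hk hA, image_rot_cancel hn hk hB,
      image_rot_cancel hn hk hC] at hconj
  constructor
  · rw [card_image_rot hn hk hA, card_image_rot hn hk hB, card_image_rot hn hk hC]
    constructor
    · rintro ⟨ρ', hv'⟩
      exact h1.1 ⟨_, pull ρ' hv'⟩
    · intro htri
      obtain ⟨ρ, hv⟩ := h1.2 htri
      exact ⟨fun i => rot n k (ρ (rot n (2 * n - k) i)),
        valid_conj hn hk hA hB hC (fun i => rfl) hv⟩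
  · intro ρ₁ ρ₂ hv1 hv2 i hi
    have e1 := h2 _ _ (pull ρ₁ hv1) (pull ρ₂ hv2) (rot n (2 * n - k) i) (rot_mem hn _ hi)
    rw [rot_cancel' hn hk hi] at e1
    have m1 : ρ₁ i ∈ nodes n := hv1.1.maps i hi
    have m2 : ρ₂ i ∈ nodes n := hv2.1.maps i hi
    have := congrArg (rot n k) e1
    rwa [rot_cancel' hn hk m1, rot_cancel' hn hk m2] at this


lemma stmt_of_cyc (hn : 0 < n) (X Y Z : Finset ℕ)
    (hXY : Disjoint X Y) (hXZ : Disjoint X Z) (hYZ : Disjoint Y Z)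
    (hun : X ∪ Y ∪ Z = nodes n)
    (hcX : IsCycContiguous n X) (hcY : IsCycContiguous n Y) (hcZ : IsCycContiguous n Z)
    (hne : X.Nonempty) : Stmt n X Y Z := by
  have hXsub : X ⊆ nodes n := hun ▸ (Finset.subset_union_left.trans Finset.subset_union_left)
  have hYsub : Y ⊆ nodes n := hun ▸ (Finset.subset_union_right.trans Finset.subset_union_left)
  have hZsub : Z ⊆ nodes n := hun ▸ Finset.subset_union_right
  obtain ⟨k, x, hk, hx, hXeq⟩ := cyc_normal hn hcX
  have hkle : k ≤ 2 * n := by omega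
  have hX'sub : Finset.Icc 1 x ⊆ nodes n := by
    intro v hv
    rw [Finset.mem_Icc] at hv
    exact mem_nodes.2 ⟨by omega, by omega⟩
  have hxpos : 1 ≤ x := by
    rcases hne with ⟨v, hv⟩
    rw [hXeq] at hv
    obtain ⟨u, hu, rfl⟩ := Finset.mem_image.1 hv
    rw [Finset.mem_Icc] at hu
    omega
  have hX'back : (Finset.Icc 1 x).image (rot n k) = X := hXeq.symm
  have hX'pull : X.image (rot n (2 * n - k)) = Finset.Icc 1 x := by
    rw [hXeq]
    exact image_rot_cancel hn hkle hX'sub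
  have hYback : (Y.image (rot n (2 * n - k))).image (rot n k) = Y :=
    image_rot_cancel' hn hkle hYsub
  have hZback : (Z.image (rot n (2 * n - k))).image (rot n k) = Z :=
    image_rot_cancel' hn hkle hZsub
  have hY'sub : Y.image (rot n (2 * n - k)) ⊆ nodes n := image_rot_subset_nodes hn hYsub
  have hZ'sub : Z.image (rot n (2 * n - k)) ⊆ nodes n := image_rot_subset_nodes hn hZsub
  have memX : ∀ v ∈ Finset.Icc 1 x, rot n k v ∈ X := by
    intro v hv
    rw [hXeq]
    exact Finset.mem_image_of_mem _ hv
  have memY : ∀ v ∈ Y.image (rot n (2 * n - k)), rot n k v ∈ Y := by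
    intro v hv
    obtain ⟨u, hu, rfl⟩ := Finset.mem_image.1 hv
    rw [rot_cancel' hn hkle (hYsub hu)]
    exact hu
  have memZ : ∀ v ∈ Z.image (rot n (2 * n - k)), rot n k v ∈ Z := by
    intro v hv
    obtain ⟨u, hu, rfl⟩ := Finset.mem_image.1 hv
    rw [rot_cancel' hn hkle (hZsub hu)]
    exact hu
  have dXY' : ∀ v, v ∈ Finset.Icc 1 x → v ∈ Y.image (rot n (2 * n - k)) → False :=
    fun v h1 h2 => Finset.disjoint_left.1 hXY (memX v h1) (memY v h2)
  have dXZ' : ∀ v, v ∈ Finset.Icc 1 x → v ∈ Z.image (rot n (2 * n - k)) → False :=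
    fun v h1 h2 => Finset.disjoint_left.1 hXZ (memX v h1) (memZ v h2)
  have dYZ' : ∀ v, v ∈ Y.image (rot n (2 * n - k)) → v ∈ Z.image (rot n (2 * n - k)) → False :=
    fun v h1 h2 => Finset.disjoint_left.1 hYZ (memY v h1) (memZ v h2)
  have hcover : ∀ v ∈ nodes n, v ∈ Finset.Icc 1 x ∨
      v ∈ Y.image (rot n (2 * n - k)) ∨ v ∈ Z.image (rot n (2 * n - k)) := by
    intro v hv
    have hrv : rot n k v ∈ nodes n := rot_mem hn _ hv
    rw [← hun] at hrv
    rcases Finset.mem_union.1 hrv with h | h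
    · rcases Finset.mem_union.1 h with h | h
      · left
        rw [← hX'pull]
        exact Finset.mem_image.2 ⟨rot n k v, h, rot_cancel hn hkle hv⟩
      · right; left
        exact Finset.mem_image.2 ⟨rot n k v, h, rot_cancel hn hkle hv⟩
    · right; right
      exact Finset.mem_image.2 ⟨rot n k v, h, rot_cancel hn hkle hv⟩
  rcases le_or_gt (2 * n) x with hx2n | hx2n
  · -- X is the whole circle
    have hYempty : Y.image (rot n (2 * n - k)) = ∅ := by
      rw [Finset.eq_empty_iff_forall_notMem]
      intro v hv
      have hvn := hY'sub hv
      rw [mem_nodes] at hvn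
      exact dXY' v (Finset.mem_Icc.2 ⟨by omega, by omega⟩) hv
    have hZempty : Z.image (rot n (2 * n - k)) = ∅ := by
      rw [Finset.eq_empty_iff_forall_notMem]
      intro v hv
      have hvn := hZ'sub hv
      rw [mem_nodes] at hvn
      exact dXZ' v (Finset.mem_Icc.2 ⟨by omega, by omega⟩) hv
    have hxeq : x = 2 * n := by omega
    have hst := stmt_norm n x 0 0 (by omega)
    have e1 : Finset.Icc (x + 1) (x + 0) = Y.image (rot n (2 * n - k)) := by
      rw [hYempty]
      exact Finset.Icc_eq_empty (by omega)
    have e2 : Finset.Icc (x + 0 + 1) (2 * n) = Z.image (rot n (2 * n - k)) := by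
      rw [hZempty]
      exact Finset.Icc_eq_empty (by omega)
    rw [e1, e2] at hst
    have hst2 := stmt_rot hn hkle hX'sub hY'sub hZ'sub hst
    rwa [hX'back, hYback, hZback] at hst2
  · -- there is a node x+1 just after X
    have hwmem : x + 1 ∈ nodes n := mem_nodes.2 ⟨by omega, by omega⟩
    have hwX : x + 1 ∉ Finset.Icc 1 x := by
      rw [Finset.mem_Icc]
      omega
    rcases hcover (x + 1) hwmem with hw | hw | hw
    · exact absurd hw hwX
    · -- Y follows X
      obtain ⟨kY, y, hkY, hy, hYeq⟩ := cyc_normal hn hcY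
      have hYim : Y.image (rot n (2 * n - k)) =
          (Finset.Icc 1 y).image (rot n ((kY + (2 * n - k)) % (2 * n))) := by
        rw [hYeq, Finset.image_image]
        apply Finset.image_congr
        intro v _
        simp only [Function.comp_apply]
        rw [rot_rot, rot_mod]
      have hmY : (kY + (2 * n - k)) % (2 * n) < 2 * n := Nat.mod_lt _ (by omega)
      have hform := image_rot_Icc hn hmY hy
      split_ifs at hform with hcase
      · rw [hform] at hYim
        have hw' := hw
        rw [hYim, Finset.mem_Icc] at hw'
        have hxnot : ¬ ((kY + (2 * n - k)) % (2 * n) + 1 ≤ x ∧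
            x ≤ (kY + (2 * n - k)) % (2 * n) + y) := by
          intro hcon
          exact dXY' x (Finset.mem_Icc.2 ⟨hxpos, le_refl x⟩)
            (by rw [hYim, Finset.mem_Icc]; exact hcon)
        have hmYx : (kY + (2 * n - k)) % (2 * n) = x := by omega
        rw [hmYx] at hYim hcase
        have hZ'Icc : Z.image (rot n (2 * n - k)) = Finset.Icc (x + y + 1) (2 * n) := by
          ext v
          constructor
          · intro hv
            have hvn := hZ'sub hv
            rw [mem_nodes] at hvn
            have h1 : v ∉ Finset.Icc 1 x := fun h => dXZ' v h hv
            have h2 : v ∉ Y.image (rot n (2 * n - k)) := fun h => dYZ' v h hv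
            rw [Finset.mem_Icc] at h1
            rw [hYim, Finset.mem_Icc] at h2
            rw [Finset.mem_Icc]
            omega
          · intro hv
            rw [Finset.mem_Icc] at hv
            rcases hcover v (mem_nodes.2 ⟨by omega, by omega⟩) with h | h | h
            · rw [Finset.mem_Icc] at h
              omega
            · rw [hYim, Finset.mem_Icc] at h
              omega
            · exact h
        have hst := stmt_norm n x y (2 * n - x - y) (by omega)
        rw [← hYim, ← hZ'Icc] at hst
        have hst2 := stmt_rot hn hkle hX'sub hY'sub hZ'sub hst
        rwa [hX'back, hYback, hZback] at hst2
      · -- wrap: impossible since 1 ∈ X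
        rw [hform] at hYim
        have h1Y : 1 ∈ Y.image (rot n (2 * n - k)) := by
          rw [hYim, Finset.mem_union, Finset.mem_Icc, Finset.mem_Icc]
          right
          omega
        exact absurd h1Y (fun h => dXY' 1 (Finset.mem_Icc.2 ⟨le_refl 1, hxpos⟩) h)
    · -- Z follows X
      obtain ⟨kZ, z, hkZ, hz, hZeq⟩ := cyc_normal hn hcZ
      have hZim : Z.image (rot n (2 * n - k)) =
          (Finset.Icc 1 z).image (rot n ((kZ + (2 * n - k)) % (2 * n))) := by
        rw [hZeq, Finset.image_image]
        apply Finset.image_congr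
        intro v _
        simp only [Function.comp_apply]
        rw [rot_rot, rot_mod]
      have hmZ : (kZ + (2 * n - k)) % (2 * n) < 2 * n := Nat.mod_lt _ (by omega)
      have hform := image_rot_Icc hn hmZ hz
      split_ifs at hform with hcase
      · rw [hform] at hZim
        have hw' := hw
        rw [hZim, Finset.mem_Icc] at hw'
        have hxnot : ¬ ((kZ + (2 * n - k)) % (2 * n) + 1 ≤ x ∧
            x ≤ (kZ + (2 * n - k)) % (2 * n) + z) := by
          intro hcon
          exact dXZ' x (Finset.mem_Icc.2 ⟨hxpos, le_refl x⟩)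
            (by rw [hZim, Finset.mem_Icc]; exact hcon)
        have hmZx : (kZ + (2 * n - k)) % (2 * n) = x := by omega
        rw [hmZx] at hZim hcase
        have hY'Icc : Y.image (rot n (2 * n - k)) = Finset.Icc (x + z + 1) (2 * n) := by
          ext v
          constructor
          · intro hv
            have hvn := hY'sub hv
            rw [mem_nodes] at hvn
            have h1 : v ∉ Finset.Icc 1 x := fun h => dXY' v h hv
            have h2 : v ∉ Z.image (rot n (2 * n - k)) := fun h => dYZ' v hv h
            rw [Finset.mem_Icc] at h1
            rw [hZim, Finset.mem_Icc] at h2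
            rw [Finset.mem_Icc]
            omega
          · intro hv
            rw [Finset.mem_Icc] at hv
            rcases hcover v (mem_nodes.2 ⟨by omega, by omega⟩) with h | h | h
            · rw [Finset.mem_Icc] at h
              omega
            · exact h
            · rw [hZim, Finset.mem_Icc] at h
              omega
        have hst := stmt_norm n x z (2 * n - x - z) (by omega)
        rw [← hZim, ← hY'Icc] at hst
        have hst2 := stmt_rot hn hkle hX'sub hZ'sub hY'sub hst
        rw [hX'back, hYback, hZback] at hst2
        exact stmt_swap23 hst2
      · rw [hform] at hZim
        have h1Z : 1 ∈ Z.image (rot n (2 * n - k)) := by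
          rw [hZim, Finset.mem_union, Finset.mem_Icc, Finset.mem_Icc]
          right
          omega
        exact absurd h1Z (fun h => dXZ' 1 (Finset.mem_Icc.2 ⟨le_refl 1, hxpos⟩) h)

end Helpers

/-- if the nodes are partitioned into three circularly contiguous arcs
`R`, `G`, `B`, a planar pairing with no pair inside a single arc exists iff the arc sizes
satisfy the triangle inequality, and when it exists it is unique. -/
theorem statement18 (n : ℕ) (R G B : Finset ℕ)
    (hRG : Disjoint R G) (hRB : Disjoint R B) (hGB : Disjoint G B)
    (hunion : R ∪ G ∪ B = nodes n)
    (hR : IsCycContiguous n R) (hG : IsCycContiguous n G) (hB : IsCycContiguous n B) :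
    ((∃ ρ : ℕ → ℕ, IsPairing n ρ ∧ IsPlanar n ρ ∧
        ∀ i ∈ nodes n,
          ¬ ((i ∈ R ∧ ρ i ∈ R) ∨ (i ∈ G ∧ ρ i ∈ G) ∨ (i ∈ B ∧ ρ i ∈ B)))
      ↔ (R.card ≤ G.card + B.card ∧ G.card ≤ R.card + B.card ∧
          B.card ≤ R.card + G.card)) ∧
    (∀ ρ₁ ρ₂ : ℕ → ℕ,
      (IsPairing n ρ₁ ∧ IsPlanar n ρ₁ ∧
        ∀ i ∈ nodes n,
          ¬ ((i ∈ R ∧ ρ₁ i ∈ R) ∨ (i ∈ G ∧ ρ₁ i ∈ G) ∨ (i ∈ B ∧ ρ₁ i ∈ B))) →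
      (IsPairing n ρ₂ ∧ IsPlanar n ρ₂ ∧
        ∀ i ∈ nodes n,
          ¬ ((i ∈ R ∧ ρ₂ i ∈ R) ∨ (i ∈ G ∧ ρ₂ i ∈ G) ∨ (i ∈ B ∧ ρ₂ i ∈ B))) →
      ∀ i ∈ nodes n, ρ₁ i = ρ₂ i) := by
  have key : Stmt n R G B := by
    rcases Nat.eq_zero_or_pos n with hn0 | hn
    · -- degenerate case n = 0
      subst hn0
      have hempty : nodes 0 = ∅ := by
        unfold nodes
        exact Finset.Icc_eq_empty (by omega)
      have hRe : R = ∅ := by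
        have : R ⊆ nodes 0 := hunion ▸ (Finset.subset_union_left.trans Finset.subset_union_left)
        rw [hempty] at this
        exact Finset.subset_empty.1 this
      have hGe : G = ∅ := by
        have : G ⊆ nodes 0 := hunion ▸ (Finset.subset_union_right.trans Finset.subset_union_left)
        rw [hempty] at this
        exact Finset.subset_empty.1 this
      have hBe : B = ∅ := by
        have : B ⊆ nodes 0 := hunion ▸ Finset.subset_union_right
        rw [hempty] at this
        exact Finset.subset_empty.1 this
      constructor
      · constructor
        · intro _
          simp [hRe, hGe, hBe]
        · intro _
          refine ⟨id, ⟨?_, ?_, ?_⟩, ?_, ?_, ?_, ?_⟩ <;>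
            first
              | (intro i hi; rw [hempty] at hi; exact absurd hi (Finset.notMem_empty i))
              | (unfold IsPlanar numCrossings numCrossingsOn
                 rw [hempty]
                 simp)
      · intro ρ₁ ρ₂ _ _ i hi
        rw [hempty] at hi
        exact absurd hi (Finset.notMem_empty i)
    · -- main case: some arc is nonempty
      have h1 : (1 : ℕ) ∈ nodes n := mem_nodes.2 ⟨le_refl 1, by omega⟩
      rw [← hunion] at h1
      have hunG : G ∪ R ∪ B = nodes n := by
        rw [← hunion]
        ext v
        simp only [Finset.mem_union]
        tauto
      have hunB : B ∪ R ∪ G = nodes n := by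
        rw [← hunion]
        ext v
        simp only [Finset.mem_union]
        tauto
      rcases Finset.mem_union.1 h1 with h | h
      · rcases Finset.mem_union.1 h with h | h
        · exact stmt_of_cyc hn R G B hRG hRB hGB hunion hR hG hB ⟨1, h⟩
        · have := stmt_of_cyc hn G R B hRG.symm hGB hRB hunG hG hR hB ⟨1, h⟩
          exact stmt_swap12 this
      · have := stmt_of_cyc hn B R G hRB.symm hGB.symm hRG hunB hB hR hG ⟨1, h⟩
        exact stmt_swap23 (stmt_swap12 this)
  constructor
  · constructor
    · rintro ⟨ρ, h⟩
      exact key.1.1 ⟨ρ, (valid_iff R G B ρ).1 h⟩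
    · intro htri
      obtain ⟨ρ, hv⟩ := key.1.2 htri
      exact ⟨ρ, (valid_iff R G B ρ).2 hv⟩
  · intro ρ₁ ρ₂ h1 h2
    exact key.2 ρ₁ ρ₂ ((valid_iff R G B ρ₁).1 h1) ((valid_iff R G B ρ₂).1 h2)

end DD
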